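/- Let H be a real Hilbert space, (φ_ℓ)_{ℓ≥1} an orthonormal family in H, μ_1,…,μ_c ∈ H, and κ ∈ {1,…,c}. Let Y = μ_κ + Σ_{ℓ≥1} A_ℓ φ_ℓ with Σ_ℓ A_ℓ² < ∞. Let β_1,…,β_{c'} ∈ H satisfy ⟨β_j, φ_ℓ⟩ = 0 for all j, ℓ, and β̂_1,…,β̂_{c'} ∈ H satisfy ‖β̂_j − β_j‖ ≤ ε for all j. Define ν_i = (⟨β_1, μ_i⟩,…,⟨β_{c'}, μ_i⟩) ∈ ℝ^{c'} for i = 1,…,c and ν̂ = (⟨β̂_1, Y⟩,…,⟨β̂_{c'}, Y⟩) ∈ ℝ^{c'}. If min_{i ≠ κ} ‖ν_κ − ν_i‖ > 2 √{c'} ε ‖Y‖, then κ is the unique minimizer of i ↦ ‖ν̂ − ν_i‖ over i ∈ {1,…,c}. -/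
import Mathlib

open scoped RealInnerProductSpace

lemma sqrt_sum_eq_norm {n : ℕ} (v : Fin n → ℝ) :
    Real.sqrt (∑ j, v j ^ 2) = ‖(WithLp.equiv 2 (Fin n → ℝ)).symm v‖ := by
  rw [EuclideanSpace.norm_eq]
  congr 1
  refine Finset.sum_congr rfl fun j _ => ?_
  simp [sq_abs]

/-- With `Y = μ κ + ∑' ℓ, A ℓ • φ ℓ`, LDA directions `β j` orthogonal to
every `φ ℓ`, estimates `β̂ j` with `‖β̂ j - β j‖ ≤ ε`, projection centroids
`ν i = (⟪β j, μ i⟫)_j` and estimated projections `ν̂ = (⟪β̂ j, Y⟫)_j`: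
if `min_{i ≠ κ} ‖ν κ - ν i‖ > 2 √c' ε ‖Y‖`, then `κ` is the unique minimizer of
`i ↦ ‖ν̂ - ν i‖`. -/
theorem stmt12 {H : Type*} [NormedAddCommGroup H] [InnerProductSpace ℝ H] [CompleteSpace H]
    (φ : ℕ → H) (hφ : Orthonormal ℝ φ) (c : ℕ) (μ : Fin c → H) (κ : Fin c)
    (A : ℕ → ℝ) (hA : Summable (fun ℓ => (A ℓ) ^ 2))
    (Y : H) (hY : HasSum (fun ℓ => A ℓ • φ ℓ) (Y - μ κ))
    (c' : ℕ) (β βhat : Fin c' → H) (ε : ℝ)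
    (hβ : ∀ (j : Fin c') (ℓ : ℕ), ⟪β j, φ ℓ⟫ = 0)
    (hβhat : ∀ j, ‖βhat j - β j‖ ≤ ε)
    (hsep : ∀ i : Fin c, i ≠ κ →
      2 * Real.sqrt c' * ε * ‖Y‖ <
        Real.sqrt (∑ j, (⟪β j, μ κ⟫ - ⟪β j, μ i⟫) ^ 2)) :
    ∀ i : Fin c, i ≠ κ →
      Real.sqrt (∑ j, (⟪βhat j, Y⟫ - ⟪β j, μ κ⟫) ^ 2) <
        Real.sqrt (∑ j, (⟪βhat j, Y⟫ - ⟪β j, μ i⟫) ^ 2) := by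
  intro i hi
  rcases Nat.eq_zero_or_pos c' with h0 | hc'
  · exact absurd (hsep i hi) (by subst h0; simp)
  -- key: ⟪β j, Y⟫ = ⟪β j, μ κ⟫
  have hkey : ∀ j, ⟪β j, Y⟫ = ⟪β j, μ κ⟫ := by
    intro j
    have h1 : HasSum (fun ℓ => ⟪β j, A ℓ • φ ℓ⟫) ⟪β j, Y - μ κ⟫ :=
      hY.mapL (innerSL ℝ (β j))
    have h2 : (fun ℓ => ⟪β j, A ℓ • φ ℓ⟫) = fun ℓ => (0 : ℝ) := by
      funext ℓ; rw [real_inner_smul_right, hβ j ℓ, mul_zero]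
    rw [h2] at h1
    have := h1.unique hasSum_zero
    rw [inner_sub_right] at this
    linarith
  -- bound each coordinate
  have hcoord : ∀ j, |⟪βhat j, Y⟫ - ⟪β j, μ κ⟫| ≤ ε * ‖Y‖ := by
    intro j
    rw [← hkey j, ← inner_sub_left]
    calc |⟪βhat j - β j, Y⟫| ≤ ‖βhat j - β j‖ * ‖Y‖ := abs_real_inner_le_norm _ _
      _ ≤ ε * ‖Y‖ := by
        exact mul_le_mul_of_nonneg_right (hβhat j) (norm_nonneg _)
  have hε : 0 ≤ ε := le_trans (norm_nonneg _) (hβhat ⟨0, hc'⟩)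
  -- Euclidean vectors
  set u : EuclideanSpace ℝ (Fin c') := (WithLp.equiv 2 (Fin c' → ℝ)).symm
    (fun j => ⟪βhat j, Y⟫) with hu
  set a : EuclideanSpace ℝ (Fin c') := (WithLp.equiv 2 (Fin c' → ℝ)).symm
    (fun j => ⟪β j, μ κ⟫) with ha
  set b : EuclideanSpace ℝ (Fin c') := (WithLp.equiv 2 (Fin c' → ℝ)).symm
    (fun j => ⟪β j, μ i⟫) with hb
  have hua : Real.sqrt (∑ j, (⟪βhat j, Y⟫ - ⟪β j, μ κ⟫) ^ 2) = ‖u - a‖ := by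
    rw [sqrt_sum_eq_norm (fun j => ⟪βhat j, Y⟫ - ⟪β j, μ κ⟫)]; rfl
  have hub : Real.sqrt (∑ j, (⟪βhat j, Y⟫ - ⟪β j, μ i⟫) ^ 2) = ‖u - b‖ := by
    rw [sqrt_sum_eq_norm (fun j => ⟪βhat j, Y⟫ - ⟪β j, μ i⟫)]; rfl
  have hab : Real.sqrt (∑ j, (⟪β j, μ κ⟫ - ⟪β j, μ i⟫) ^ 2) = ‖a - b‖ := by
    rw [sqrt_sum_eq_norm (fun j => ⟪β j, μ κ⟫ - ⟪β j, μ i⟫)]; rfl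
  rw [hua, hub]
  have hnua : ‖u - a‖ ≤ Real.sqrt c' * (ε * ‖Y‖) := by
    rw [← hua]
    have hsum : ∑ j, (⟪βhat j, Y⟫ - ⟪β j, μ κ⟫) ^ 2 ≤ (c' : ℝ) * (ε * ‖Y‖) ^ 2 := by
      calc ∑ j, (⟪βhat j, Y⟫ - ⟪β j, μ κ⟫) ^ 2
          ≤ ∑ _j : Fin c', (ε * ‖Y‖) ^ 2 := by
            refine Finset.sum_le_sum fun j _ => ?_
            rw [← sq_abs]
            exact pow_le_pow_left₀ (abs_nonneg _) (hcoord j) 2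
        _ = (c' : ℝ) * (ε * ‖Y‖) ^ 2 := by simp [mul_comm]
    calc Real.sqrt (∑ j, (⟪βhat j, Y⟫ - ⟪β j, μ κ⟫) ^ 2)
        ≤ Real.sqrt ((c' : ℝ) * (ε * ‖Y‖) ^ 2) := Real.sqrt_le_sqrt hsum
      _ = Real.sqrt c' * (ε * ‖Y‖) := by
          rw [Real.sqrt_mul (Nat.cast_nonneg _), Real.sqrt_sq (by positivity)]
  have hsep' : 2 * Real.sqrt c' * ε * ‖Y‖ < ‖a - b‖ := by rw [← hab]; exact hsep i hi
  have htri : ‖a - b‖ ≤ ‖u - a‖ + ‖u - b‖ := by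
    calc ‖a - b‖ = ‖(a - u) + (u - b)‖ := by rw [sub_add_sub_cancel]
      _ ≤ ‖a - u‖ + ‖u - b‖ := norm_add_le _ _
      _ = ‖u - a‖ + ‖u - b‖ := by rw [norm_sub_rev]
  nlinarith [norm_nonneg (u - b), Real.sqrt_nonneg (c' : ℝ), norm_nonneg Y]
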